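/- Let X be a real-valued stochastic process on [0,1] with independent increments such that every increment X(b) − X(a) for a < b has a non-atomic distribution, and let I₁ = [a₁, b₁] and I₂ = [a₂, b₂] be disjoint closed subintervals of [0,1] with b₁ < a₂, and assume X has almost surely continuous paths. Then almost surely inf_{t ∈ I₁} X(t) ≠ inf_{t ∈ I₂} X(t). -/

import Mathlib

open MeasureTheory ProbabilityTheory

/-- A process on `[0,1]` with independent increments: for any monotone sequence of times
in `[0,1]`, the initial value together with the successive increments are independent. -/
def HasIndepIncrements {Ω : Type*} [MeasurableSpace Ω] (P : Measure Ω)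
    (X : ℝ → Ω → ℝ) : Prop :=
  ∀ (n : ℕ) (t : Fin (n + 1) → ℝ), Monotone t → (∀ i, t i ∈ Set.Icc (0:ℝ) 1) →
    iIndepFun
      (Fin.cases (motive := fun _ => Ω → ℝ) (fun ω => X (t 0) ω)
        (fun (i : Fin n) (ω : Ω) => X (t i.succ) ω - X (t i.castSucc) ω)) P

/- Auxiliary lemmas -/

lemma tele_sum (G : ℕ → ℝ) {p q : ℕ} (h : p ≤ q) :
    ∑ i ∈ Finset.Ico p q, (G (i+1) - G i) = G q - G p := by
  rw [Finset.sum_Ico_eq_sub _ h, Finset.sum_range_sub, Finset.sum_range_sub]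
  ring

lemma inf_dense_seq {f : ℝ → ℝ} {a b : ℝ} (hab : a ≤ b)
    (hf : ContinuousOn f (Set.Icc a b)) (c : ℝ) (e : ℕ → ℝ)
    (he : ∀ n, e n ∈ Set.Icc a b) (hd : Set.Icc a b ⊆ closure (Set.range e)) :
    ⨅ n, (f (e n) - c) = sInf (f '' Set.Icc a b) - c := by
  obtain ⟨x, hx, hmin⟩ :=
    (isCompact_Icc (a := a) (b := b)).exists_isMinOn (Set.nonempty_Icc.2 hab) hf
  have hmin' : ∀ y ∈ Set.Icc a b, f x ≤ f y := fun y hy => hmin hy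
  have hsInf : sInf (f '' Set.Icc a b) = f x := by
    apply le_antisymm
    · exact csInf_le ⟨f x, by rintro _ ⟨y, hy, rfl⟩; exact hmin' y hy⟩ ⟨x, hx, rfl⟩
    · exact le_csInf ⟨f x, ⟨x, hx, rfl⟩⟩ (by rintro _ ⟨y, hy, rfl⟩; exact hmin' y hy)
  rw [hsInf]
  have hbdd : BddBelow (Set.range fun n => f (e n) - c) :=
    ⟨f x - c, by rintro _ ⟨n, rfl⟩; exact sub_le_sub_right (hmin' _ (he n)) c⟩
  apply le_antisymm
  · obtain ⟨u, hu_mem, hu_tend⟩ := mem_closure_iff_seq_limit.1 (hd hx)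
    have htend : Filter.Tendsto (fun m => f (u m) - c) Filter.atTop (nhds (f x - c)) := by
      have hfx : Filter.Tendsto (fun m => f (u m)) Filter.atTop (nhds (f x)) := by
        apply (hf x hx).tendsto.comp
        rw [tendsto_nhdsWithin_iff]
        refine ⟨hu_tend, Filter.Eventually.of_forall fun m => ?_⟩
        obtain ⟨n, hn⟩ := hu_mem m
        rw [← hn]; exact he n
      exact hfx.sub_const c
    refine ge_of_tendsto htend (Filter.Eventually.of_forall fun m => ?_)
    obtain ⟨n, hn⟩ := hu_mem m
    calc ⨅ k, (f (e k) - c) ≤ f (e n) - c := ciInf_le hbdd n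
    _ = f (u m) - c := by rw [hn]
  · exact le_ciInf fun n => sub_le_sub_right (hmin' _ (he n)) c

lemma clamp_dense (a b : ℝ) :
    Set.Icc a b ⊆ closure (Set.range
      (fun m : ℕ => max a (min b (((Denumerable.eqv ℚ).symm m : ℚ) : ℝ)))) := by
  intro s hs
  have hrange : Set.range (fun m : ℕ => max a (min b (((Denumerable.eqv ℚ).symm m : ℚ) : ℝ)))
      = Set.range (fun q : ℚ => max a (min b (q : ℝ))) :=
    Function.Surjective.range_comp (Denumerable.eqv ℚ).symm.surjective
      (fun q : ℚ => max a (min b (q : ℝ)))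
  rw [hrange]
  have hg : Continuous fun x : ℝ => max a (min b x) :=
    continuous_const.max (continuous_const.min continuous_id)
  have hs' : max a (min b s) = s := by
    rw [min_eq_right hs.2, max_eq_right hs.1]
  have h1 : s ∈ (fun x : ℝ => max a (min b x)) '' closure (Set.range ((↑) : ℚ → ℝ)) := by
    rw [Rat.denseRange_cast.closure_range]
    exact ⟨s, Set.mem_univ s, hs'⟩
  have h2 := image_closure_subset_closure_image hg (s := Set.range ((↑) : ℚ → ℝ)) h1
  rwa [← Set.range_comp] at h2

lemma indep_finite {Ω : Type*} [MeasurableSpace Ω] (P : Measure Ω) [IsProbabilityMeasure P]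
    (X : ℝ → Ω → ℝ) (hmeas : ∀ t ∈ Set.Icc (0:ℝ) 1, Measurable (X t))
    (hindep : HasIndepIncrements P X)
    {a₁ b₁ a₂ b₂ : ℝ} (h0 : 0 ≤ a₁) (h₁ : a₁ ≤ b₁) (h₂ : b₁ < a₂) (h₃ : a₂ ≤ b₂)
    (h₄ : b₂ ≤ 1)
    (e₁ e₂ : ℕ → ℝ) (he₁ : ∀ k, e₁ k ∈ Set.Icc a₁ b₁) (he₂ : ∀ k, e₂ k ∈ Set.Icc a₂ b₂)
    (n : ℕ) :
    IndepFun (fun ω => X a₂ ω - X b₁ ω)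
      (fun ω => (fun k : Fin n => X (e₁ k) ω - X b₁ ω,
                 fun k : Fin n => X (e₂ k) ω - X a₂ ω)) P := by
  classical
  have hb₂1 : b₁ ≤ 1 := (h₂.le.trans h₃).trans h₄
  have ha₂0 : 0 ≤ a₂ := (h0.trans h₁).trans h₂.le
  set F : Finset ℝ :=
    ((Finset.range n).image e₁ ∪ {b₁, a₂}) ∪ (Finset.range n).image e₂ with hF
  have hb₁F : b₁ ∈ F := by simp [hF]
  have ha₂F : a₂ ∈ F := by simp [hF]
  have hFmem : ∀ x ∈ F, (x ∈ Set.Icc (0:ℝ) 1) ∧ (x ≤ b₁ ∨ a₂ ≤ x) := by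
    intro x hx
    simp only [hF, Finset.mem_union, Finset.mem_image, Finset.mem_insert,
      Finset.mem_singleton, Finset.mem_range] at hx
    rcases hx with (⟨k, _, rfl⟩ | hx | hx) | ⟨k, _, rfl⟩
    · exact ⟨⟨h0.trans (he₁ k).1, (he₁ k).2.trans hb₂1⟩, Or.inl (he₁ k).2⟩
    · subst hx; exact ⟨⟨h0.trans h₁, hb₂1⟩, Or.inl le_rfl⟩
    · subst hx; exact ⟨⟨ha₂0, h₃.trans h₄⟩, Or.inr le_rfl⟩
    · exact ⟨⟨ha₂0.trans (he₂ k).1, (he₂ k).2.trans h₄⟩, Or.inr (he₂ k).1⟩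
  obtain ⟨N, hN⟩ : ∃ N, F.card = N + 1 :=
    ⟨F.card - 1, (Nat.succ_pred_eq_of_pos (Finset.card_pos.2 ⟨b₁, hb₁F⟩)).symm⟩
  set iso : Fin (N+1) ≃o {x // x ∈ F} := F.orderIsoOfFin hN with hiso
  set t : Fin (N+1) → ℝ := fun i => (iso i : ℝ) with ht
  have ht_mono : Monotone t := fun i j hij => Subtype.coe_le_coe.2 (iso.monotone hij)
  have ht_smono : StrictMono t := fun i j hij => Subtype.coe_lt_coe.2 (iso.strictMono hij)
  have ht_memF : ∀ i, t i ∈ F := fun i => (iso i).2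
  have ht_mem : ∀ i, t i ∈ Set.Icc (0:ℝ) 1 := fun i => (hFmem _ (ht_memF i)).1
  set f : Fin (N+1) → Ω → ℝ := Fin.cases (motive := fun _ => Ω → ℝ) (fun ω => X (t 0) ω)
      (fun (i : Fin N) (ω : Ω) => X (t i.succ) ω - X (t i.castSucc) ω) with hf
  have hI : iIndepFun f P := hindep N t ht_mono ht_mem
  have hfsucc : ∀ (i : Fin N),
      f i.succ = fun ω => X (t i.succ) ω - X (t i.castSucc) ω := by
    intro i; rw [hf]; exact Fin.cases_succ (motive := fun _ => Ω → ℝ) i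
  have hfmeas : ∀ i, Measurable (f i) := by
    intro i
    induction i using Fin.cases with
    | zero =>
        have : f 0 = fun ω => X (t 0) ω := by
          rw [hf]; exact Fin.cases_zero (motive := fun _ => Ω → ℝ)
        rw [this]; exact hmeas _ (ht_mem 0)
    | succ i =>
        rw [hfsucc i]
        exact (hmeas _ (ht_mem i.succ)).sub (hmeas _ (ht_mem i.castSucc))
  set j₁ : Fin (N+1) := iso.symm ⟨b₁, hb₁F⟩ with hj₁
  set j₂ : Fin (N+1) := iso.symm ⟨a₂, ha₂F⟩ with hj₂
  have htj₁ : t j₁ = b₁ := by rw [ht, hj₁]; simp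
  have htj₂ : t j₂ = a₂ := by rw [ht, hj₂]; simp
  have hj₁j₂ : (j₁ : ℕ) + 1 = (j₂ : ℕ) := by
    have hlt : j₁ < j₂ := by
      rw [hj₁, hj₂]
      exact iso.symm.strictMono (Subtype.mk_lt_mk.2 h₂)
    have hlt' : (j₁ : ℕ) < (j₂ : ℕ) := hlt
    by_contra hne
    have h2' : (j₁ : ℕ) + 1 < (j₂ : ℕ) := by omega
    have hmidlt : (j₁ : ℕ) + 1 < N + 1 := h2'.trans j₂.isLt
    have hk1 : t j₁ < t ⟨(j₁:ℕ)+1, hmidlt⟩ :=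
      ht_smono (Fin.lt_def.mpr (Nat.lt_succ_self _))
    have hk2 : t ⟨(j₁:ℕ)+1, hmidlt⟩ < t j₂ :=
      ht_smono (Fin.lt_def.mpr h2')
    rcases (hFmem _ (ht_memF ⟨(j₁:ℕ)+1, hmidlt⟩)).2 with h | h
    · rw [htj₁] at hk1; linarith
    · rw [htj₂] at hk2; linarith
  have hj₁N : (j₁ : ℕ) < N := by have := j₂.isLt; omega
  have hj₁N1 : (j₁ : ℕ) ≤ N := hj₁N.le
  set k₀ : Fin (N+1) := Fin.succ ⟨(j₁:ℕ), hj₁N⟩ with hk₀def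
  have hk₀val : (k₀ : ℕ) = (j₁ : ℕ) + 1 := rfl
  have hk₀ : f k₀ = fun ω => X a₂ ω - X b₁ ω := by
    rw [hk₀def, hfsucc]
    have h1 : (Fin.succ ⟨(j₁:ℕ), hj₁N⟩ : Fin (N+1)) = j₂ := by
      apply Fin.ext; simp [hj₁j₂]
    have h2 : (Fin.castSucc ⟨(j₁:ℕ), hj₁N⟩ : Fin (N+1)) = j₁ := by
      apply Fin.ext; simp
    rw [h1, h2, htj₁, htj₂]
  have he₁F : ∀ k : Fin n, e₁ k ∈ F := fun k =>
    Finset.mem_union_left _ (Finset.mem_union_left _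
      (Finset.mem_image_of_mem _ (Finset.mem_range.2 k.isLt)))
  have he₂F : ∀ k : Fin n, e₂ k ∈ F := fun k =>
    Finset.mem_union_right _ (Finset.mem_image_of_mem _ (Finset.mem_range.2 k.isLt))
  set p₁ : Fin n → Fin (N+1) := fun k => iso.symm ⟨e₁ k, he₁F k⟩ with hp₁def
  set p₂ : Fin n → Fin (N+1) := fun k => iso.symm ⟨e₂ k, he₂F k⟩ with hp₂def
  have htp₁ : ∀ k, t (p₁ k) = e₁ k := fun k => by rw [ht, hp₁def]; simp
  have htp₂ : ∀ k, t (p₂ k) = e₂ k := fun k => by rw [ht, hp₂def]; simp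
  have hp₁le : ∀ k, (p₁ k : ℕ) ≤ (j₁ : ℕ) := fun k =>
    iso.symm.monotone (Subtype.mk_le_mk.2 (he₁ k).2)
  have hp₂ge : ∀ k, (j₂ : ℕ) ≤ (p₂ k : ℕ) := fun k =>
    iso.symm.monotone (Subtype.mk_le_mk.2 (he₂ k).1)
  set S : Finset (Fin (N+1)) := {k₀} with hS
  set T : Finset (Fin (N+1)) := Finset.univ.erase k₀ with hT
  have hST : Disjoint S T := Finset.disjoint_singleton_left.2 (Finset.notMem_erase _ _)
  have base := hI.indepFun_finset S T hST hfmeas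
  -- the function G used for telescoping
  set G : Ω → ℕ → ℝ :=
    fun ω m => X (t ⟨min m N, Nat.lt_succ_of_le (min_le_right m N)⟩) ω with hG
  have hGval : ∀ (ω : Ω) (m : ℕ) (hm : m ≤ N), G ω m = X (t ⟨m, by omega⟩) ω := by
    intro ω m hm
    have h' : (⟨min m N, Nat.lt_succ_of_le (min_le_right m N)⟩ : Fin (N+1))
        = (⟨m, by omega⟩ : Fin (N+1)) := Fin.ext (min_eq_left hm)
    rw [hG]
    exact congrArg (fun z => X (t z) ω) h'
  -- evaluation map on the S side
  set φ : ({x // x ∈ S} → ℝ) → ℝ := fun v => v ⟨k₀, Finset.mem_singleton_self k₀⟩ with hφdef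
  have hφ : Measurable φ := measurable_pi_apply _
  -- evaluation map on the T side
  set V : ({x // x ∈ T} → ℝ) → ℕ → ℝ := fun v m =>
    if hm : m < N + 1 then
      (if hTm : (⟨m, hm⟩ : Fin (N+1)) ∈ T then v ⟨⟨m, hm⟩, hTm⟩ else 0)
    else 0 with hV
  have hVmeas : ∀ m, Measurable fun v => V v m := by
    intro m
    rw [hV]
    by_cases hm : m < N + 1
    · by_cases hTm : (⟨m, hm⟩ : Fin (N+1)) ∈ T
      · simpa only [dif_pos hm, dif_pos hTm] using
          measurable_pi_apply (⟨⟨m, hm⟩, hTm⟩ : {x // x ∈ T})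
      · simp only [dif_pos hm, dif_neg hTm]; exact measurable_const
    · simp only [dif_neg hm]; exact measurable_const
  set ψ : ({x // x ∈ T} → ℝ) → (Fin n → ℝ) × (Fin n → ℝ) := fun v =>
    (fun k => -(∑ i ∈ Finset.Ico ((p₁ k : ℕ)) ((j₁ : ℕ)), V v (i+1)),
     fun k => ∑ i ∈ Finset.Ico ((j₂ : ℕ)) ((p₂ k : ℕ)), V v (i+1)) with hψdef
  have hψ : Measurable ψ := by
    apply Measurable.prodMk
    · exact measurable_pi_lambda _ fun k =>
        (Finset.measurable_sum _ fun i _ => hVmeas (i+1)).neg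
    · exact measurable_pi_lambda _ fun k =>
        Finset.measurable_sum _ fun i _ => hVmeas (i+1)
  -- key evaluation of V on the actual increments
  have hVf : ∀ (ω : Ω) (i : ℕ), i < N → i + 1 ≠ (k₀ : ℕ) →
      V (fun j : {x // x ∈ T} => f j ω) (i+1) = G ω (i+1) - G ω i := by
    intro ω i hiN hne
    have hm : i + 1 < N + 1 := by omega
    have hTm : (⟨i+1, hm⟩ : Fin (N+1)) ∈ T := by
      rw [hT]
      refine Finset.mem_erase.2 ⟨?_, Finset.mem_univ _⟩
      intro hcon
      exact hne (by rw [← hcon])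
    rw [hV]
    simp only [dif_pos hm, dif_pos hTm]
    have hsucc : (⟨i+1, hm⟩ : Fin (N+1)) = Fin.succ ⟨i, by omega⟩ := Fin.ext rfl
    rw [hsucc, hfsucc]
    rw [hGval ω (i+1) (by omega), hGval ω i (by omega)]
    rfl
  -- first component
  have claim1 : ∀ (ω : Ω) (k : Fin n),
      -(∑ i ∈ Finset.Ico ((p₁ k : ℕ)) ((j₁ : ℕ)), V (fun j : {x // x ∈ T} => f j ω) (i+1))
        = X (e₁ k) ω - X b₁ ω := by
    intro ω k
    have hsum : ∑ i ∈ Finset.Ico ((p₁ k : ℕ)) ((j₁ : ℕ)),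
        V (fun j : {x // x ∈ T} => f j ω) (i+1)
        = ∑ i ∈ Finset.Ico ((p₁ k : ℕ)) ((j₁ : ℕ)), (G ω (i+1) - G ω i) := by
      refine Finset.sum_congr rfl fun i hi => ?_
      rw [Finset.mem_Ico] at hi
      exact hVf ω i (by omega) (by omega)
    rw [hsum, tele_sum (G ω) (hp₁le k)]
    rw [hGval ω _ hj₁N1, hGval ω _ ((hp₁le k).trans hj₁N1)]
    have e1 : (⟨(j₁:ℕ), by omega⟩ : Fin (N+1)) = j₁ := Fin.ext rfl
    have e2 : (⟨((p₁ k):ℕ), by omega⟩ : Fin (N+1)) = p₁ k := Fin.ext rfl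
    rw [e1, e2, htj₁, htp₁]
    ring
  -- second component
  have claim2 : ∀ (ω : Ω) (k : Fin n),
      (∑ i ∈ Finset.Ico ((j₂ : ℕ)) ((p₂ k : ℕ)), V (fun j : {x // x ∈ T} => f j ω) (i+1))
        = X (e₂ k) ω - X a₂ ω := by
    intro ω k
    have hp₂N : (p₂ k : ℕ) ≤ N := Nat.lt_succ_iff.1 (p₂ k).isLt
    have hsum : ∑ i ∈ Finset.Ico ((j₂ : ℕ)) ((p₂ k : ℕ)),
        V (fun j : {x // x ∈ T} => f j ω) (i+1)
        = ∑ i ∈ Finset.Ico ((j₂ : ℕ)) ((p₂ k : ℕ)), (G ω (i+1) - G ω i) := by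
      refine Finset.sum_congr rfl fun i hi => ?_
      rw [Finset.mem_Ico] at hi
      exact hVf ω i (by omega) (by omega)
    rw [hsum, tele_sum (G ω) (hp₂ge k)]
    rw [hGval ω _ hp₂N, hGval ω _ ((hp₂ge k).trans hp₂N)]
    have e1 : (⟨((p₂ k):ℕ), by omega⟩ : Fin (N+1)) = p₂ k := Fin.ext rfl
    have e2 : (⟨(j₂:ℕ), by omega⟩ : Fin (N+1)) = j₂ := Fin.ext rfl
    rw [e1, e2, htj₂, htp₂]
  have hgoal := base.comp hφ hψ
  have hL : (φ ∘ fun a (i : {x // x ∈ S}) => f i a) = fun ω => X a₂ ω - X b₁ ω := by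
    funext ω
    have : (φ ∘ fun a (i : {x // x ∈ S}) => f i a) ω = f k₀ ω := rfl
    rw [this, hk₀]
  have hR : (ψ ∘ fun a (i : {x // x ∈ T}) => f i a)
      = fun ω => (fun k : Fin n => X (e₁ k) ω - X b₁ ω,
                  fun k : Fin n => X (e₂ k) ω - X a₂ ω) := by
    funext ω
    show ψ (fun i : {x // x ∈ T} => f i ω) = _
    rw [hψdef]
    refine Prod.ext ?_ ?_
    · funext k; exact claim1 ω k
    · funext k; exact claim2 ω k
  rw [hL, hR] at hgoal
  exact hgoal

/-- For a process with independent, non-atomic increments and a.s. continuous paths,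
the infima over two disjoint closed subintervals of `[0,1]` almost surely differ. -/
theorem stmt_2 {Ω : Type*} [MeasurableSpace Ω] (P : Measure Ω) [IsProbabilityMeasure P]
    (X : ℝ → Ω → ℝ) (hmeas : ∀ t ∈ Set.Icc (0:ℝ) 1, Measurable (X t))
    (hindep : HasIndepIncrements P X)
    (hatom : ∀ a b : ℝ, 0 ≤ a → a < b → b ≤ 1 →
      ∀ x : ℝ, P.map (fun ω => X b ω - X a ω) {x} = 0)
    (hcont : ∀ᵐ ω ∂P, ContinuousOn (fun t => X t ω) (Set.Icc 0 1))
    (a₁ b₁ a₂ b₂ : ℝ) (h0 : 0 ≤ a₁) (h₁ : a₁ ≤ b₁) (h₂ : b₁ < a₂) (h₃ : a₂ ≤ b₂)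
    (h₄ : b₂ ≤ 1) :
    ∀ᵐ ω ∂P,
      sInf ((fun t => X t ω) '' Set.Icc a₁ b₁) ≠
        sInf ((fun t => X t ω) '' Set.Icc a₂ b₂) := by
  classical
  have hb₂1 : b₁ ≤ 1 := (h₂.le.trans h₃).trans h₄
  have ha₂0 : 0 ≤ a₂ := (h0.trans h₁).trans h₂.le
  have hsub₁ : Set.Icc a₁ b₁ ⊆ Set.Icc (0:ℝ) 1 := Set.Icc_subset_Icc h0 hb₂1
  have hsub₂ : Set.Icc a₂ b₂ ⊆ Set.Icc (0:ℝ) 1 := Set.Icc_subset_Icc ha₂0 h₄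
  set e₁ : ℕ → ℝ := fun m => max a₁ (min b₁ (((Denumerable.eqv ℚ).symm m : ℚ) : ℝ)) with he₁def
  set e₂ : ℕ → ℝ := fun m => max a₂ (min b₂ (((Denumerable.eqv ℚ).symm m : ℚ) : ℝ)) with he₂def
  have he₁ : ∀ m, e₁ m ∈ Set.Icc a₁ b₁ := fun m =>
    ⟨le_max_left _ _, max_le h₁ (min_le_left _ _)⟩
  have he₂ : ∀ m, e₂ m ∈ Set.Icc a₂ b₂ := fun m =>
    ⟨le_max_left _ _, max_le h₃ (min_le_left _ _)⟩
  have hd₁ : Set.Icc a₁ b₁ ⊆ closure (Set.range e₁) := clamp_dense a₁ b₁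
  have hd₂ : Set.Icc a₂ b₂ ⊆ closure (Set.range e₂) := clamp_dense a₂ b₂
  set D : Ω → ℝ := fun ω => X a₂ ω - X b₁ ω with hD
  set Y₁ : Ω → ℝ := fun ω => ⨅ m, (X (e₁ m) ω - X b₁ ω) with hY₁
  set Y₂ : Ω → ℝ := fun ω => ⨅ m, (X (e₂ m) ω - X a₂ ω) with hY₂
  have hmeas₁ : ∀ m, Measurable (fun ω => X (e₁ m) ω - X b₁ ω) := fun m =>
    (hmeas _ (hsub₁ (he₁ m))).sub (hmeas b₁ ⟨h0.trans h₁, hb₂1⟩)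
  have hmeas₂ : ∀ m, Measurable (fun ω => X (e₂ m) ω - X a₂ ω) := fun m =>
    (hmeas _ (hsub₂ (he₂ m))).sub (hmeas a₂ ⟨ha₂0, h₃.trans h₄⟩)
  have hY₁meas : Measurable Y₁ := Measurable.iInf hmeas₁
  have hY₂meas : Measurable Y₂ := Measurable.iInf hmeas₂
  have hDmeas : Measurable D :=
    (hmeas a₂ ⟨ha₂0, h₃.trans h₄⟩).sub (hmeas b₁ ⟨h0.trans h₁, hb₂1⟩)
  -- the finite vectors
  set W : (n : ℕ) → Ω → (Fin n → ℝ) × (Fin n → ℝ) := fun n ω =>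
    (fun k : Fin n => X (e₁ k) ω - X b₁ ω, fun k : Fin n => X (e₂ k) ω - X a₂ ω) with hW
  have hWindep : ∀ n, IndepFun D (W n) P := fun n =>
    indep_finite P X hmeas hindep h0 h₁ h₂ h₃ h₄ e₁ e₂ he₁ he₂ n
  have hWmeas : ∀ n, Measurable (W n) := by
    intro n
    rw [hW]
    exact Measurable.prodMk
      (measurable_pi_lambda (fun ω (k : Fin n) => X (e₁ k) ω - X b₁ ω) fun k => hmeas₁ k)
      (measurable_pi_lambda (fun ω (k : Fin n) => X (e₂ k) ω - X a₂ ω) fun k => hmeas₂ k)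
  set G : ℕ → MeasurableSpace Ω := fun n => MeasurableSpace.comap (W n) inferInstance with hGdef
  have hGle : ∀ n, G n ≤ ‹MeasurableSpace Ω› := fun n => measurable_iff_comap_le.1 (hWmeas n)
  have hGmono : Monotone G := by
    apply monotone_nat_of_le_succ
    intro n
    have hprojmeas : Measurable (fun p : (Fin (n+1) → ℝ) × (Fin (n+1) → ℝ) =>
        ((fun k : Fin n => p.1 k.castSucc), (fun k : Fin n => p.2 k.castSucc))) :=
      (measurable_pi_lambda _ fun k => (measurable_pi_apply _).comp measurable_fst).prodMk
        (measurable_pi_lambda _ fun k => (measurable_pi_apply _).comp measurable_snd)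
    have hproj : W n = (fun p : (Fin (n+1) → ℝ) × (Fin (n+1) → ℝ) =>
        ((fun k : Fin n => p.1 k.castSucc), (fun k : Fin n => p.2 k.castSucc))) ∘ W (n+1) := by
      funext ω
      rw [hW]
      refine Prod.ext ?_ ?_ <;> rfl
    rw [hGdef]
    dsimp only
    rw [hproj, ← MeasurableSpace.comap_comp]
    exact MeasurableSpace.comap_mono (measurable_iff_comap_le.1 hprojmeas)
  have hindepG : Indep (⨆ n, G n) (MeasurableSpace.comap D inferInstance) P := by
    refine indep_iSup_of_monotone (fun n => ?_) hGle (measurable_iff_comap_le.1 hDmeas) hGmono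
    exact (hWindep n).symm
  -- Y is measurable with respect to ⨆ n, G n
  have hYG : Measurable[⨆ n, G n] fun ω => (Y₁ ω, Y₂ ω) := by
    have hcomp : ∀ m : ℕ, Measurable[⨆ n, G n] fun ω => X (e₁ m) ω - X b₁ ω := by
      intro m
      have hWm : Measurable[G (m+1)] (W (m+1)) := comap_measurable _
      have h1 : Measurable[G (m+1)] fun ω => X (e₁ m) ω - X b₁ ω := by
        have heq : (fun ω => X (e₁ m) ω - X b₁ ω)
            = (fun p : (Fin (m+1) → ℝ) × (Fin (m+1) → ℝ) =>
                p.1 ⟨m, Nat.lt_succ_self m⟩) ∘ W (m+1) := by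
          funext ω; rfl
        rw [heq]
        exact ((measurable_pi_apply _).comp measurable_fst).comp hWm
      exact h1.mono (le_iSup G (m+1)) le_rfl
    have hcomp₂ : ∀ m : ℕ, Measurable[⨆ n, G n] fun ω => X (e₂ m) ω - X a₂ ω := by
      intro m
      have hWm : Measurable[G (m+1)] (W (m+1)) := comap_measurable _
      have h1 : Measurable[G (m+1)] fun ω => X (e₂ m) ω - X a₂ ω := by
        have heq : (fun ω => X (e₂ m) ω - X a₂ ω)
            = (fun p : (Fin (m+1) → ℝ) × (Fin (m+1) → ℝ) =>
                p.2 ⟨m, Nat.lt_succ_self m⟩) ∘ W (m+1) := by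
          funext ω; rfl
        rw [heq]
        exact ((measurable_pi_apply _).comp measurable_snd).comp hWm
      exact h1.mono (le_iSup G (m+1)) le_rfl
    exact (Measurable.iInf hcomp).prodMk (Measurable.iInf hcomp₂)
  have hYD : IndepFun (fun ω => (Y₁ ω, Y₂ ω)) D P :=
    indep_of_indep_of_le_left hindepG (measurable_iff_comap_le.1 hYG)
  -- the null event
  have hYmeas : Measurable fun ω => (Y₁ ω, Y₂ ω) := hY₁meas.prodMk hY₂meas
  have hmap : P.map (fun ω => ((Y₁ ω, Y₂ ω), D ω))
      = (P.map fun ω => (Y₁ ω, Y₂ ω)).prod (P.map D) :=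
    (indepFun_iff_map_prod_eq_prod_map_map hYmeas.aemeasurable hDmeas.aemeasurable).1 hYD
  have hnull : P {ω | D ω = Y₁ ω - Y₂ ω} = 0 := by
    have hsm : MeasurableSet {p : (ℝ × ℝ) × ℝ | p.2 = p.1.1 - p.1.2} :=
      measurableSet_eq_fun measurable_snd
        ((measurable_fst.comp measurable_fst).sub (measurable_snd.comp measurable_fst))
    have hpre : {ω | D ω = Y₁ ω - Y₂ ω}
        = (fun ω => ((Y₁ ω, Y₂ ω), D ω)) ⁻¹' {p : (ℝ × ℝ) × ℝ | p.2 = p.1.1 - p.1.2} := rfl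
    rw [hpre, ← Measure.map_apply (hYmeas.prodMk hDmeas) hsm, hmap]
    haveI : IsProbabilityMeasure (P.map D) := Measure.isProbabilityMeasure_map hDmeas.aemeasurable
    rw [Measure.prod_apply hsm]
    have hslice : ∀ y : ℝ × ℝ,
        (P.map D) (Prod.mk y ⁻¹' {p : (ℝ × ℝ) × ℝ | p.2 = p.1.1 - p.1.2}) = 0 := by
      intro y
      have : Prod.mk y ⁻¹' {p : (ℝ × ℝ) × ℝ | p.2 = p.1.1 - p.1.2} = {y.1 - y.2} := by
        ext d; simp [Set.mem_preimage]
      rw [this, hD]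
      exact hatom b₁ a₂ (h0.trans h₁) h₂ (h₃.trans h₄) _
    simp only [hslice, lintegral_zero]
  have hae : ∀ᵐ ω ∂P, ¬ (D ω = Y₁ ω - Y₂ ω) := by
    rw [ae_iff]; simpa only [not_not] using hnull
  filter_upwards [hcont, hae] with ω hc hne heq
  apply hne
  have hc₁ : ContinuousOn (fun u => X u ω) (Set.Icc a₁ b₁) := hc.mono hsub₁
  have hc₂ : ContinuousOn (fun u => X u ω) (Set.Icc a₂ b₂) := hc.mono hsub₂
  have hA : Y₁ ω = sInf ((fun u => X u ω) '' Set.Icc a₁ b₁) - X b₁ ω :=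
    inf_dense_seq h₁ hc₁ (X b₁ ω) e₁ he₁ hd₁
  have hB : Y₂ ω = sInf ((fun u => X u ω) '' Set.Icc a₂ b₂) - X a₂ ω :=
    inf_dense_seq h₃ hc₂ (X a₂ ω) e₂ he₂ hd₂
  rw [hD, hA, hB, heq]
  ring
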